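/- Let (Y, 𝔅, μ) be a measure space, K a nonempty finite index type, and φ : K → Y → ℝ≥0 a family of measurable functions. Let ν be a measure on (Y, 𝔅) such that for every measurable set B ⊆ Y and every k ∈ K, ν(B) ≤ ∫_B φ k dμ. Then for every measurable set B ⊆ Y, ν(B) ≤ ∫_B (fun y => min over k ∈ K of φ k y) dμ, where the integrand is the pointwise minimum of the family (which is measurable since K is finite). -/

import Mathlib

open MeasureTheory
open scoped ENNReal NNReal

lemma min_bound_aux {Y : Type*} [MeasurableSpace Y] (μ ν : Measure Y)
    (f g : Y → ℝ≥0∞) (hf : Measurable f) (hg : Measurable g)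
    (h1 : ∀ B : Set Y, MeasurableSet B → ν B ≤ ∫⁻ y in B, f y ∂μ)
    (h2 : ∀ B : Set Y, MeasurableSet B → ν B ≤ ∫⁻ y in B, g y ∂μ) :
    ∀ B : Set Y, MeasurableSet B → ν B ≤ ∫⁻ y in B, min (f y) (g y) ∂μ := by
  intro B hB
  have hS : MeasurableSet {y | f y ≤ g y} := measurableSet_le hf hg
  have key : ν B ≤ ν (B ∩ {y | f y ≤ g y}) + ν (B \ {y | f y ≤ g y}) :=
    le_of_eq (measure_inter_add_diff B hS).symm
  have e1 : ∫⁻ y in B ∩ {y | f y ≤ g y}, min (f y) (g y) ∂μ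
      = ∫⁻ y in B ∩ {y | f y ≤ g y}, f y ∂μ := by
    refine setLIntegral_congr_fun (hB.inter hS) (fun y hy => ?_)
    exact min_eq_left hy.2
  have e2 : ∫⁻ y in B \ {y | f y ≤ g y}, min (f y) (g y) ∂μ
      = ∫⁻ y in B \ {y | f y ≤ g y}, g y ∂μ := by
    refine setLIntegral_congr_fun (hB.diff hS) (fun y hy => ?_)
    exact min_eq_right (le_of_not_ge hy.2)
  calc ν B ≤ ν (B ∩ {y | f y ≤ g y}) + ν (B \ {y | f y ≤ g y}) := key
    _ ≤ (∫⁻ y in B ∩ {y | f y ≤ g y}, f y ∂μ) + ∫⁻ y in B \ {y | f y ≤ g y}, g y ∂μ :=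
        add_le_add (h1 _ (hB.inter hS)) (h2 _ (hB.diff hS))
    _ = (∫⁻ y in B ∩ {y | f y ≤ g y}, min (f y) (g y) ∂μ)
        + ∫⁻ y in B \ {y | f y ≤ g y}, min (f y) (g y) ∂μ := by rw [e1, e2]
    _ = ∫⁻ y in B, min (f y) (g y) ∂μ := lintegral_inter_add_diff _ _ hS

/-- If a measure `ν` is bounded on every measurable set `B` by the integral
over `B` of each member of a finite nonempty family of measurable sub-densities `φ k`, then
`ν` is bounded on every measurable set by the integral of the pointwise minimum
(infimum over the finite index type) of the family. -/
theorem pointwise_min_bound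
    {Y : Type*} [MeasurableSpace Y] (μ ν : Measure Y)
    {K : Type*} [Fintype K] [Nonempty K]
    (φ : K → Y → NNReal) (hφ : ∀ k, Measurable (φ k))
    (h : ∀ B : Set Y, MeasurableSet B → ∀ k : K, ν B ≤ ∫⁻ y in B, (φ k y : ℝ≥0∞) ∂μ) :
    ∀ B : Set Y, MeasurableSet B → ν B ≤ ∫⁻ y in B, (⨅ k : K, (φ k y : ℝ≥0∞)) ∂μ := by
  classical
  have main : ∀ s : Finset K, s.Nonempty →
      (Measurable fun y => ⨅ k ∈ s, (φ k y : ℝ≥0∞)) ∧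
      ∀ B : Set Y, MeasurableSet B → ν B ≤ ∫⁻ y in B, (⨅ k ∈ s, (φ k y : ℝ≥0∞)) ∂μ := by
    intro s hs
    induction s using Finset.cons_induction with
    | empty => exact absurd hs (by simp)
    | cons a t ha ih =>
      rcases t.eq_empty_or_nonempty with rfl | ht
      · constructor
        · simpa using ((hφ a).coe_nnreal_ennreal)
        · intro B hB
          simpa using h B hB a
      · obtain ⟨iht_meas, iht⟩ := ih ht
        have hmin : (fun y => ⨅ k ∈ Finset.cons a t ha, (φ k y : ℝ≥0∞))
            = fun y => min ((φ a y : ℝ≥0∞)) (⨅ k ∈ t, (φ k y : ℝ≥0∞)) := by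
          funext y
          rw [Finset.cons_eq_insert, Finset.iInf_insert]
        constructor
        · rw [hmin]
          exact ((hφ a).coe_nnreal_ennreal).min iht_meas
        · intro B hB
          rw [hmin]
          exact min_bound_aux μ ν _ _ ((hφ a).coe_nnreal_ennreal) iht_meas
            (fun B hB => h B hB a) iht B hB
  intro B hB
  have := (main Finset.univ Finset.univ_nonempty).2 B hB
  simpa using this
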